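/- arXiv:1205.2516 — 6 statements merged into one kernel-verified Lean document; each statement's English description precedes it below -/
import Mathlib

section
/- Let W, X, Y, Z be finite sets and suppose the square with maps f : W → X, g : W → Y, h : X → Z, k : Y → Z (kg = hf) is cartesian (a pullback, i.e. W ≅ {(x,y) : h(x) = k(y)} compatibly). Then for any commutative semiring R: T_g ∘ R_f = R_k ∘ T_h and N_g ∘ R_f = R_k ∘ N_h as maps (X → R) → (Y → R), where T_u(s)(b) = ∑_{a ∈ u⁻¹{b}} s(a), N_u(s)(b) = ∏_{a ∈ u⁻¹{b}} s(a), and R_u(s) = s ∘ u. -/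
open scoped Classical

/-- Additive transfer along `u`: `T_u(s)(b) = ∑_{a ∈ u⁻¹{b}} s(a)`. -/
noncomputable def Tfer {X Y R : Type*} [Fintype X] [CommSemiring R]
    (f : X → Y) (s : X → R) : Y → R :=
  fun y => ∑ x : X, if f x = y then s x else 0

/-- Multiplicative norm along `u`: `N_u(s)(b) = ∏_{a ∈ u⁻¹{b}} s(a)`. -/
noncomputable def Nfer {X Y R : Type*} [Fintype X] [CommSemiring R]
    (f : X → Y) (s : X → R) : Y → R :=
  fun y => ∏ x : X, if f x = y then s x else 1

/-- Restriction along `u`: `R_u(s) = s ∘ u`. -/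
def Rfer {X Y R : Type*} (f : X → Y) (r : Y → R) : X → R := r ∘ f

/-- The Mackey (base-change) property: for a cartesian square
`W → X, W → Y, X → Z, Y → Z` one has `T_g ∘ R_f = R_k ∘ T_h` and
`N_g ∘ R_f = R_k ∘ N_h`. -/
theorem mackey_base_change {W X Y Z R : Type*} [Fintype W] [Fintype X] [Fintype Y]
    [Fintype Z] [CommSemiring R]
    (f : W → X) (g : W → Y) (h : X → Z) (k : Y → Z)
    (hcomm : ∀ w : W, k (g w) = h (f w))
    (hpb : ∀ (x : X) (y : Y), h x = k y → ∃! w : W, f w = x ∧ g w = y) :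
    (∀ s : X → R, Tfer g (Rfer f s) = Rfer k (Tfer h s)) ∧
    (∀ s : X → R, Nfer g (Rfer f s) = Rfer k (Nfer h s)) := by
  have key : ∀ y : Y, ∃ e : {w // g w = y} ≃ {x // h x = k y},
      ∀ w, (e w : X) = f (w : W) := by
    intro y
    have hto : ∀ w : {w // g w = y}, h (f (w : W)) = k y := by
      rintro ⟨w, hw⟩; rw [← hcomm, hw]
    refine ⟨Equiv.ofBijective (fun w => ⟨f (w : W), hto w⟩) ⟨?_, ?_⟩, fun w => rfl⟩
    · rintro ⟨w1, h1⟩ ⟨w2, h2⟩ hw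
      obtain ⟨w0, -, huniq⟩ := hpb (f w1) y (by rw [← hcomm, h1])
      have e1 := huniq w1 ⟨rfl, h1⟩
      have e2 := huniq w2 ⟨(congrArg Subtype.val hw).symm, h2⟩
      exact Subtype.ext (e1.trans e2.symm)
    · rintro ⟨x, hx⟩
      obtain ⟨w, ⟨hf, hg⟩, -⟩ := hpb x y hx
      exact ⟨⟨w, hg⟩, Subtype.ext hf⟩
  constructor
  · intro s
    funext y
    obtain ⟨e, he⟩ := key y
    show (∑ w : W, if g w = y then s (f w) else 0) = ∑ x : X, if h x = k y then s x else 0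
    rw [← Finset.sum_filter, ← Finset.sum_filter,
      ← Finset.sum_subtype_eq_sum_filter, ← Finset.sum_subtype_eq_sum_filter]
    simp only [Finset.subtype_univ]
    exact Fintype.sum_equiv e _ _ (fun w => by rw [he w])
  · intro s
    funext y
    obtain ⟨e, he⟩ := key y
    show (∏ w : W, if g w = y then s (f w) else 1) = ∏ x : X, if h x = k y then s x else 1
    rw [← Finset.prod_filter, ← Finset.prod_filter,
      ← Finset.prod_subtype_eq_prod_filter, ← Finset.prod_subtype_eq_prod_filter]
    simp only [Finset.subtype_univ]
    exact Fintype.prod_equiv e _ _ (fun w => by rw [he w])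
end

section
/- Let g : X → Y and h : Y → Z be maps of finite sets. Define B = {(z,s) : z ∈ Z, s : h⁻¹{z} → X with g∘s = id}, A = {(y,s) : y ∈ Y, s : h⁻¹{h(y)} → X with g∘s = id}, and maps p : A → X, p(y,s) = s(y); q : A → B, q(y,s) = (h(y), s); r : B → Z, r(z,s) = z. Then for any commutative semiring R, N_h ∘ T_g = T_r ∘ N_q ∘ R_p as maps (X → R) → (Z → R), where T, N, R denote fiberwise sum, fiberwise product, and precomposition respectively. -/
open scoped Classical

/-- `B = {(z,s) : z ∈ Z, s : h⁻¹{z} → X, g ∘ s = id}`. -/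
abbrev DistB {X Y Z : Type*} (g : X → Y) (h : Y → Z) : Type _ :=
  Σ z : Z, {s : {y : Y // h y = z} → X // ∀ y, g (s y) = y.1}

/-- `A = {(y,s) : y ∈ Y, s : h⁻¹{h(y)} → X, g ∘ s = id}`. -/
abbrev DistA {X Y Z : Type*} (g : X → Y) (h : Y → Z) : Type _ :=
  Σ y : Y, {s : {y' : Y // h y' = h y} → X // ∀ y', g (s y') = y'.1}

/-- `p(y,s) = s(y)`. -/
def distP {X Y Z : Type*} (g : X → Y) (h : Y → Z) (a : DistA g h) : X :=
  a.2.1 ⟨a.1, rfl⟩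

/-- `q(y,s) = (h(y), s)`. -/
def distQ {X Y Z : Type*} (g : X → Y) (h : Y → Z) (a : DistA g h) : DistB g h :=
  ⟨h a.1, a.2⟩

/-- `r(z,s) = z`. -/
def distR {X Y Z : Type*} (g : X → Y) (h : Y → Z) (b : DistB g h) : Z := b.1

noncomputable instance {X Y Z : Type*} [Fintype X] [Fintype Y] [Fintype Z]
    (g : X → Y) (h : Y → Z) : Fintype (DistA g h) :=
  Fintype.ofFinite _

noncomputable instance {X Y Z : Type*} [Fintype X] [Fintype Y] [Fintype Z]
    (g : X → Y) (h : Y → Z) : Fintype (DistB g h) :=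
  Fintype.ofFinite _


section DistAux
variable {X Y Z R : Type*} [Fintype X] [Fintype Y] [Fintype Z] [CommSemiring R]
variable (g : X → Y) (h : Y → Z)

/-- Lift a section over `z` to an element of `DistA` at a point `y` of the fiber. -/
def distPhi (z : Z) (σ : {σ : {y : Y // h y = z} → X // ∀ y, g (σ y) = y.1})
    (y : {y : Y // h y = z}) : DistA g h :=
  ⟨y.1, ⟨fun y' => σ.1 ⟨y'.1, y'.2.trans y.2⟩, fun y' => σ.2 ⟨y'.1, y'.2.trans y.2⟩⟩⟩

omit [Fintype X] [Fintype Y] [Fintype Z] in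
lemma distQ_phi (z : Z) (σ : {σ : {y : Y // h y = z} → X // ∀ y, g (σ y) = y.1})
    (y : {y : Y // h y = z}) : distQ g h (distPhi g h z σ y) = ⟨z, σ⟩ := by
  obtain ⟨y, hy⟩ := y
  subst hy
  rfl

lemma dist_inner (s : X → R) (z : Z)
    (σ : {σ : {y : Y // h y = z} → X // ∀ y, g (σ y) = y.1}) :
    (∏ a : DistA g h, if distQ g h a = ⟨z, σ⟩ then s (distP g h a) else 1)
      = ∏ y : {y : Y // h y = z}, s (σ.1 y) := by
  classical
  rw [← Finset.prod_filter,
    Finset.prod_subtype (p := fun a => distQ g h a = (⟨z, σ⟩ : DistB g h))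
      (Finset.univ.filter fun a => distQ g h a = (⟨z, σ⟩ : DistB g h))
      (by simp) (fun a => s (distP g h a))]
  refine (Fintype.prod_bijective
    (fun y => (⟨distPhi g h z σ y, distQ_phi g h z σ y⟩ :
      {a : DistA g h // distQ g h a = ⟨z, σ⟩})) ⟨?_, ?_⟩ _ _ ?_).symm
  · intro y₁ y₂ hy
    exact Subtype.ext (congrArg (fun a => a.1.1) hy)
  · rintro ⟨⟨y, τ⟩, ha⟩
    have hz : h y = z := congrArg Sigma.fst ha
    subst hz
    have hτ : τ = σ := eq_of_heq (Sigma.ext_iff.mp ha).2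
    subst hτ
    exact ⟨⟨y, rfl⟩, rfl⟩
  · intro y
    rfl

end DistAux

/-- The distributor identity: `N_h ∘ T_g = T_r ∘ N_q ∘ R_p`. -/
theorem distributor_identity {X Y Z R : Type*} [Fintype X] [Fintype Y] [Fintype Z]
    [CommSemiring R] (g : X → Y) (h : Y → Z) :
    ∀ s : X → R,
      Nfer h (Tfer g s) =
        Tfer (distR g h) (Nfer (distQ g h) (Rfer (distP g h) s)) := by
  intro s
  funext z
  classical
  have lhs : Nfer h (Tfer g s) z
      = ∑ σ : {σ : {y : Y // h y = z} → X // ∀ y, g (σ y) = y.1},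
          ∏ y : {y : Y // h y = z}, s (σ.1 y) := by
    have h1 : Nfer h (Tfer g s) z
        = ∏ y : {y : Y // h y = z}, ∑ x ∈ Finset.univ.filter (fun x => g x = y.1), s x := by
      rw [Nfer, ← Finset.prod_filter,
        Finset.prod_subtype (p := fun y => h y = z) (Finset.univ.filter fun y => h y = z)
          (by simp) (fun y => Tfer g s y)]
      exact Finset.prod_congr rfl fun y _ => by rw [Tfer, ← Finset.sum_filter]
    rw [h1, Finset.prod_univ_sum]
    rw [Finset.sum_subtype _ (p := fun p : {y : Y // h y = z} → X => ∀ y, g (p y) = y.1)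
      (by simp [Fintype.mem_piFinset]) (fun p => ∏ y, s (p y))]
  have rhs : Tfer (distR g h) (Nfer (distQ g h) (Rfer (distP g h) s)) z
      = ∑ σ : {σ : {y : Y // h y = z} → X // ∀ y, g (σ y) = y.1},
          ∏ y : {y : Y // h y = z}, s (σ.1 y) := by
    rw [Tfer, ← Finset.sum_filter,
      Finset.sum_subtype (p := fun b : DistB g h => distR g h b = z)
        (Finset.univ.filter fun b : DistB g h => distR g h b = z) (by simp)
        (fun b => Nfer (distQ g h) (Rfer (distP g h) s) b)]
    refine (Fintype.sum_bijective
      (fun σ => (⟨⟨z, σ⟩, rfl⟩ : {b : DistB g h // distR g h b = z})) ⟨?_, ?_⟩ _ _ ?_).symm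
    · intro σ₁ σ₂ hσ
      have h2 : (⟨z, σ₁⟩ : DistB g h) = ⟨z, σ₂⟩ := congrArg Subtype.val hσ
      exact eq_of_heq (Sigma.ext_iff.mp h2).2
    · rintro ⟨⟨z', σ⟩, hb⟩
      have hz : z' = z := hb
      subst hz
      exact ⟨σ, rfl⟩
    · intro σ
      simp only [Nfer, Rfer, Function.comp]
      convert (dist_inner g h s z σ).symm
  rw [lhs, rhs]
end

section
/- Let A = ℤ[α]/(α²) and B = ℤ[β,γ]/(β², βγ, γ², 2γ), with maps res(i + jβ + kγ) = i + 2jα, trc(i + jα) = 2i + jβ, nrm(i + jα) = i² + ijβ + j²γ, and trivial involution on A. Then these data satisfy the Tambara pair axioms: trc is additive, nrm is multiplicative, res is a ring homomorphism, res(trc(a)) = a + ā, res(nrm(a)) = a·ā, nrm(a₀ + a₁) = nrm(a₀) + nrm(a₁) + trc(a₀·ā₁), and trc(a·res(b)) = trc(a)·b. -/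
/-- `A = ℤ[α]/(α²)`, represented as pairs `(i, j) = i + jα`. -/
abbrev TPA : Type := ℤ × ℤ

/-- `B = ℤ[β,γ]/(β², βγ, γ², 2γ)`, represented as triples `(i, j, k) = i + jβ + kγ`. -/
abbrev TPB : Type := ℤ × ℤ × ZMod 2

/-- Multiplication on `A = ℤ[α]/(α²)`. -/
def mulA (a b : TPA) : TPA := (a.1 * b.1, a.1 * b.2 + a.2 * b.1)

/-- Multiplication on `B = ℤ[β,γ]/(β², βγ, γ², 2γ)`. -/
def mulB (a b : TPB) : TPB :=
  (a.1 * b.1, a.1 * b.2.1 + a.2.1 * b.1, a.1 * b.2.2 + a.2.2 * b.1)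

/-- `res(i + jβ + kγ) = i + 2jα`. -/
def res9 (b : TPB) : TPA := (b.1, 2 * b.2.1)

/-- `trc(i + jα) = 2i + jβ`. -/
def trc9 (a : TPA) : TPB := (2 * a.1, a.2, 0)

/-- `nrm(i + jα) = i² + ijβ + j²γ`. -/
def nrm9 (a : TPA) : TPB := (a.1 ^ 2, a.1 * a.2, ((a.2 : ZMod 2)) ^ 2)

/-- The data `(A, B, res, trc, nrm)` with trivial involution on `A` satisfies the
Tambara pair axioms for the group of order two. -/
theorem tambara_pair_example :
    -- trc is additive
    (trc9 0 = 0) ∧ (∀ a b : TPA, trc9 (a + b) = trc9 a + trc9 b) ∧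
    -- nrm is multiplicative
    (nrm9 (1, 0) = (1, 0, 0)) ∧ (∀ a b : TPA, nrm9 (mulA a b) = mulB (nrm9 a) (nrm9 b)) ∧
    -- res is a ring homomorphism
    (res9 (1, 0, 0) = (1, 0)) ∧ (res9 0 = 0) ∧
    (∀ a b : TPB, res9 (a + b) = res9 a + res9 b) ∧
    (∀ a b : TPB, res9 (mulB a b) = mulA (res9 a) (res9 b)) ∧
    -- res(trc(a)) = a + ā  (the involution on A is trivial)
    (∀ a : TPA, res9 (trc9 a) = a + a) ∧
    -- res(nrm(a)) = a·ā
    (∀ a : TPA, res9 (nrm9 a) = mulA a a) ∧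
    -- nrm(a₀ + a₁) = nrm(a₀) + nrm(a₁) + trc(a₀·ā₁)
    (∀ a b : TPA, nrm9 (a + b) = nrm9 a + nrm9 b + trc9 (mulA a b)) ∧
    -- trc(a·res(b)) = trc(a)·b
    (∀ (a : TPA) (b : TPB), trc9 (mulA a (res9 b)) = mulB (trc9 a) b) := by
  refine ⟨by simp [trc9], fun a b => by simp [trc9, Prod.ext_iff, mul_add], by simp [nrm9],
    fun a b => by
      simp only [nrm9, mulA, mulB, Prod.ext_iff]
      refine ⟨by ring, by ring, ?_⟩
      push_cast
      ring_nf
      rw [show ((2:ZMod 2) = 0) by decide]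
      ring,
    by simp [res9], by simp [res9],
    fun a b => by simp [res9, Prod.ext_iff]; ring,
    fun a b => by simp [res9, mulA, mulB, Prod.ext_iff]; ring,
    fun a => by simp [res9, trc9, Prod.ext_iff, two_mul],
    fun a => by simp only [res9, nrm9, mulA, Prod.ext_iff]; exact ⟨by ring, by ring⟩,
    fun a b => by
      simp only [nrm9, trc9, mulA, Prod.fst_add, Prod.snd_add, Prod.ext_iff]
      refine ⟨by ring, by ring, ?_⟩
      push_cast
      ring_nf
      rw [show ((2:ZMod 2) = 0) by decide]
      ring,
    fun a b => by
      simp only [trc9, mulA, res9, mulB, Prod.ext_iff]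
      refine ⟨by ring, by ring, ?_⟩
      push_cast
      rw [show (2:ZMod 2) = 0 by decide]
      ring⟩
end

section
/- Let A and B be abelian groups and M the set of all functions A → B. For a ∈ A define δ[a] : M → M by (δ[a]f)(x) = f(a+x) − f(x). If f : A → B is polynomial of degree at most n and g : B → C is polynomial of degree at most m (where C is another abelian group), then g ∘ f : A → C is polynomial of degree at most nm. -/
/-- `f : A → B` is polynomial of degree at most `n` if for every finite index set `I`
with `|I| > n`, every `a : I → A` and every `x ∈ A`,
`∑_{J ⊆ I} (−1)^{|I∖J|} f(∑_{j∈J} a(j) + x) = 0`. -/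
def IsPolyDeg {A B : Type*} [AddCommGroup A] [AddCommGroup B] (f : A → B) (n : ℕ) : Prop :=
  ∀ k : ℕ, n < k → ∀ (a : Fin k → A) (x : A),
    ∑ J : Finset (Fin k), ((-1 : ℤ) ^ (k - J.card)) • f ((∑ j ∈ J, a j) + x) = 0

set_option linter.unusedSectionVars false

namespace PolyComp

variable {A B C : Type*} [AddCommGroup A] [AddCommGroup B] [AddCommGroup C]

def D (b : A) (f : A → B) : A → B := fun x => f (b + x) - f x

@[simp] lemma D_apply (b : A) (f : A → B) (x : A) : D b f x = f (b + x) - f x := rfl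

lemma D_zero (b : A) : D b (0 : A → B) = 0 := by funext x; simp [D]

lemma D_add (b : A) (f g : A → B) : D b (f + g) = D b f + D b g := by
  funext x; simp [D]; abel

lemma D_comm (a b : A) (f : A → B) : D a (D b f) = D b (D a f) := by
  funext x; simp [D, add_left_comm]; abel

def R : ℕ → (A → B) → Prop
  | 0, f => f = 0
  | (k+1), f => ∀ b, R k (D b f)

@[simp] lemma R_zero_iff (f : A → B) : R 0 f ↔ f = 0 := Iff.rfl
@[simp] lemma R_succ_iff (k : ℕ) (f : A → B) : R (k+1) f ↔ ∀ b, R k (D b f) := Iff.rfl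

lemma R_zero_fun : ∀ k, R k (0 : A → B)
  | 0 => rfl
  | (k+1) => fun b => by rw [D_zero]; exact R_zero_fun k

lemma R_mono {k : ℕ} {f : A → B} (h : R k f) : R (k+1) f := by
  induction k generalizing f with
  | zero => intro b; rw [show f = 0 from h, D_zero]; rfl
  | succ k ih => intro b; exact ih (h b)

lemma R_of_le {k l : ℕ} (hkl : k ≤ l) {f : A → B} (h : R k f) : R l f := by
  induction hkl with
  | refl => exact h
  | step _ ih => exact R_mono ih

lemma R_add {k : ℕ} {f g : A → B} (hf : R k f) (hg : R k g) : R k (f + g) := by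
  induction k generalizing f g with
  | zero => rw [show f = 0 from hf, show g = 0 from hg, add_zero]; rfl
  | succ k ih => intro b; rw [D_add]; exact ih (hf b) (hg b)

def iterD : List B → (B → C) → (B → C)
  | [], g => g
  | (b :: l), g => iterD l (D b g)

lemma iterD_D (l : List B) (b : B) (g : B → C) :
    iterD l (D b g) = D b (iterD l g) := by
  induction l generalizing g with
  | nil => rfl
  | cons c l ih => show iterD l (D c (D b g)) = _; rw [D_comm, ih]; rfl

lemma iterD_eq_zero (l : List B) : ∀ g : B → C, R l.length g → iterD l g = 0 := by
  induction l with
  | nil => intro g hg; exact hg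
  | cons b l ih => intro g hg; exact ih _ (hg b)

def MD (g : B → C) : List (A → B) → (A → B) → A → C
  | [], f => fun x => g (f x)
  | (u :: us), f => MD g us (f + u) - MD g us f

@[simp] lemma MD_nil (g : B → C) (f : A → B) : MD g [] f = fun x => g (f x) := rfl
@[simp] lemma MD_cons (g : B → C) (u : A → B) (us : List (A → B)) (f : A → B) :
    MD g (u :: us) f = MD g us (f + u) - MD g us f := rfl

lemma MD_eval (g : B → C) (us : List (A → B)) (f : A → B) (x : A) :
    MD g us f x = iterD (us.map (fun u => u x)) g (f x) := by
  induction us generalizing f with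
  | nil => rfl
  | cons u us ih =>
    show MD g us (f + u) x - MD g us f x = _
    rw [ih, ih]
    show _ = iterD (us.map fun u => u x) (D (u x) g) (f x)
    rw [iterD_D]
    simp [D, add_comm (u x) (f x)]

lemma MD_vanish (g : B → C) (us : List (A → B)) (f : A → B) (hg : R us.length g) :
    MD g us f = 0 := by
  funext x
  rw [MD_eval, iterD_eq_zero _ _ (by simpa using hg)]
  rfl

lemma MD_zero_inc (g : B → C) (pre post : List (A → B)) (f : A → B) :
    MD g (pre ++ (0 : A → B) :: post) f = 0 := by
  induction pre generalizing f with
  | nil => simp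
  | cons a pre ih => simp [ih]

lemma MD_split (g : B → C) (pre : List (A → B)) (u w : A → B) (us : List (A → B)) (f : A → B) :
    MD g (pre ++ (u + w) :: us) f
      = MD g (pre ++ u :: us) f + MD g (pre ++ w :: us) (f + u) := by
  induction pre generalizing f with
  | nil =>
    simp only [List.nil_append, MD_cons]
    rw [show f + (u + w) = (f + u) + w by abel]
    abel
  | cons a pre ih =>
    simp only [List.cons_append, MD_cons]
    rw [ih, ih, show f + u + a = f + a + u by abel]
    abel

def Sh (b : A) (f : A → B) : A → B := fun x => f (b + x)

lemma Sh_add (b : A) (f u : A → B) : Sh b (f + u) = Sh b f + Sh b u := rfl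

lemma Sh_eq (b : A) (u : A → B) : Sh b u = u + D b u := by
  funext x; simp [Sh, D]

lemma MD_shift (g : B → C) (us : List (A → B)) (f : A → B) (b x : A) :
    MD g us f (b + x) = MD g (us.map (Sh b)) (Sh b f) x := by
  induction us generalizing f with
  | nil => rfl
  | cons u us ih =>
    show MD g us (f + u) (b + x) - MD g us f (b + x) = _
    rw [ih, ih]
    rfl

lemma D_MD (g : B → C) (us : List (A → B)) (f : A → B) (b : A) :
    D b (MD g us f)
      = (MD g (us.map (Sh b)) (Sh b f) - MD g us (Sh b f)) + MD g ((D b f) :: us) f := by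
  funext x
  simp only [D_apply, MD_shift g us f b x, MD_cons, Pi.add_apply, Pi.sub_apply]
  rw [show f + D b f = Sh b f from (Sh_eq b f).symm]
  abel

lemma Q_sh {n : ℕ} (b : A) {u : A → B} {e : ℕ} (h : R (e+1) u ∧ e ≤ n) :
    R (e+1) (Sh b u) ∧ e ≤ n := by
  refine ⟨?_, h.2⟩
  rw [Sh_eq]
  exact R_add h.1 (R_mono (h.1 b))

lemma forall2_sh {n : ℕ} (b : A) {us : List (A → B)} {es : List ℕ}
    (h : List.Forall₂ (fun u e => R (e+1) u ∧ e ≤ n) us es) :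
    List.Forall₂ (fun u e => R (e+1) u ∧ e ≤ n) (us.map (Sh b)) es := by
  rw [List.forall₂_map_left_iff]
  exact h.imp (fun {u e} hu => Q_sh b hu)

lemma forall2_append {α β : Type*} {r : α → β → Prop} :
    ∀ {l1 : List α} {l2 : List β} {l3 : List α} {l4 : List β},
      List.Forall₂ r l1 l2 → List.Forall₂ r l3 l4 → List.Forall₂ r (l1 ++ l3) (l2 ++ l4) := by
  intro l1 l2 l3 l4 h1 h2
  induction h1 with
  | nil => exact h2
  | cons hab _ ih => exact List.Forall₂.cons hab ih

lemma inner (g : B → C) (m n : ℕ) (hg : R (m+1) g) (E : ℕ)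
    (IH : ∀ E' : ℕ, E' < E → ∀ (f : A → B), R (n+1) f →
      ∀ (us : List (A → B)) (es : List ℕ),
        List.Forall₂ (fun u e => R (e+1) u ∧ e ≤ n) us es →
        us.length ≤ m → (m - us.length) * n + es.sum ≤ E' → R (E'+1) (MD g us f))
    (b : A) :
    ∀ (suf : List (A → B)) (ess : List ℕ) (pre : List (A → B)) (esp : List ℕ) (F : A → B),
      R (n+1) F →
      List.Forall₂ (fun u e => R (e+1) u ∧ e ≤ n) pre esp →
      List.Forall₂ (fun u e => R (e+1) u ∧ e ≤ n) suf ess →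
      pre.length + suf.length ≤ m →
      (m - (pre.length + suf.length)) * n + (esp.sum + ess.sum) ≤ E →
      R E (MD g (pre ++ suf.map (Sh b)) F - MD g (pre ++ suf) F) := by
  intro suf
  induction suf with
  | nil =>
    intro ess pre esp F hF _ _ _ _
    rw [List.map_nil, sub_self]
    exact R_zero_fun E
  | cons u suf ih =>
    intro ess pre esp F hF hpre hsuf hr hE
    obtain ⟨e, ess', hu, hsuf', rfl⟩ :
        ∃ e ess', (R (e+1) u ∧ e ≤ n) ∧
          List.Forall₂ (fun u e => R (e+1) u ∧ e ≤ n) suf ess' ∧ ess = e :: ess' := by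
      cases hsuf with
      | cons h1 h2 => exact ⟨_, _, h1, h2, rfl⟩
    have key : MD g (pre ++ (u :: suf).map (Sh b)) F
        = MD g (pre ++ u :: suf.map (Sh b)) F
          + MD g (pre ++ (D b u) :: suf.map (Sh b)) (F + u) := by
      rw [List.map_cons, Sh_eq b u]
      exact MD_split g pre u (D b u) _ F
    have hrw : MD g (pre ++ (u :: suf).map (Sh b)) F - MD g (pre ++ u :: suf) F
        = (MD g (pre ++ u :: suf.map (Sh b)) F - MD g (pre ++ u :: suf) F)
          + MD g (pre ++ (D b u) :: suf.map (Sh b)) (F + u) := by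
      rw [key]; abel
    rw [hrw]
    apply R_add
    · -- telescoping tail: recurse with pre ++ [u]
      have e1 : pre ++ u :: suf.map (Sh b) = (pre ++ [u]) ++ suf.map (Sh b) := by simp
      have e2 : pre ++ u :: suf = (pre ++ [u]) ++ suf := by simp
      rw [e1, e2]
      refine ih ess' (pre ++ [u]) (esp ++ [e]) F hF
        (forall2_append hpre (List.Forall₂.cons hu List.Forall₂.nil)) hsuf' ?_ ?_
      · simp only [List.length_append, List.length_cons, List.length_nil] at hr ⊢
        omega
      · have hl : (pre ++ [u]).length + suf.length = pre.length + (u :: suf).length := by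
          simp; omega
        rw [hl]
        simp only [List.sum_append, List.sum_cons, List.sum_nil] at hE ⊢
        omega
    · -- split-off term
      rcases Nat.eq_zero_or_pos e with he | he
      · subst he
        have hDu : D b u = (0 : A → B) := hu.1 b
        rw [hDu, MD_zero_inc]
        exact R_zero_fun E
      · -- e ≥ 1 : use the main inductive hypothesis at E - 1
        have hrlen : (pre ++ (D b u) :: suf.map (Sh b)).length
            = pre.length + (u :: suf).length := by simp
        have hsum : (m - (pre.length + (u :: suf).length)) * n
              + (esp.sum + (e :: ess').sum) ≤ E := hE
        set P := (m - (pre.length + (u :: suf).length)) * n with hP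
        have hE1 : 1 ≤ E := by
          simp only [List.sum_cons] at hsum; omega
        obtain ⟨E'', rfl⟩ : ∃ E'', E = E'' + 1 := ⟨E - 1, by omega⟩
        refine IH E'' (by omega) (F + u)
          (R_add hF (R_of_le (by omega) hu.1))
          (pre ++ (D b u) :: suf.map (Sh b)) (esp ++ (e - 1) :: ess')
          ?_ ?_ ?_
        · refine forall2_append hpre (List.Forall₂.cons ⟨?_, by omega⟩ (forall2_sh b hsuf'))
          have := hu.1 b
          have he1 : e - 1 + 1 = e := by omega
          rw [he1]
          exact this
        · rw [hrlen]; exact hr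
        · rw [hrlen, ← hP]
          simp only [List.sum_append, List.sum_cons, List.sum_cons] at hsum ⊢
          omega

theorem main (g : B → C) (m n : ℕ) (hg : R (m+1) g) :
    ∀ (E : ℕ) (f : A → B), R (n+1) f → ∀ (us : List (A → B)) (es : List ℕ),
      List.Forall₂ (fun u e => R (e+1) u ∧ e ≤ n) us es →
      us.length ≤ m → (m - us.length) * n + es.sum ≤ E →
      R (E+1) (MD g us f) := by
  intro E
  induction E using Nat.strong_induction_on with
  | _ E IH =>
  intro f hf us es hus hr hE
  rw [R_succ_iff]
  intro b
  rw [D_MD]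
  apply R_add
  · -- inner telescoping term
    have hShf : R (n+1) (Sh b f) := by
      rw [Sh_eq]; exact R_add hf (R_mono (hf b))
    have := inner g m n hg E IH b us es [] [] (Sh b f) hShf
      List.Forall₂.nil hus (by simpa using hr) (by simpa using hE)
    simpa using this
  · -- the term MD g (D b f :: us) f
    rcases Nat.eq_zero_or_pos n with hn | hn
    · -- n = 0 : f is constant, D b f = 0
      subst hn
      have h0 : D b f = (0 : A → B) := hf b
      rw [h0, show MD g ((0 : A → B) :: us) f = 0 from by
        simpa using MD_zero_inc g [] us f]
      exact R_zero_fun E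
    · rcases lt_or_eq_of_le hr with hrm | hrm
      · -- us.length < m : recurse
        have h5 : m - (us.length + 1) + 1 = m - us.length := by omega
        have h6 : (m - us.length) * n = (m - (us.length + 1)) * n + n := by
          rw [← h5, Nat.succ_mul]
        rw [h6] at hE
        set P := (m - (us.length + 1)) * n with hP
        have hE1 : 1 ≤ E := by omega
        obtain ⟨E'', rfl⟩ : ∃ E'', E = E'' + 1 := ⟨E - 1, by omega⟩
        refine IH E'' (by omega) f hf (D b f :: us) ((n-1) :: es)
          (List.Forall₂.cons ⟨?_, Nat.sub_le n 1⟩ hus) ?_ ?_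
        · have := hf b
          have h7 : n - 1 + 1 = n := by omega
          rw [h7]
          exact this
        · simpa using hrm
        · simp only [List.length_cons, List.sum_cons, ← hP]
          omega
      · -- us.length = m : vanishing
        have hlen : (D b f :: us).length = m + 1 := by simp [hrm]
        rw [MD_vanish g _ f (by rw [hlen]; exact hg)]
        exact R_zero_fun E

lemma D_comp (g : B → C) (f : A → B) (b : A) :
    D b (fun x => g (f x)) = MD g [D b f] f := by
  funext x
  simp only [D_apply, MD_cons, MD_nil, Pi.add_apply, Pi.sub_apply, D_apply]
  rw [show f x + (f (b + x) - f x) = f (b + x) by abel]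

theorem R_comp {g : B → C} {f : A → B} {m n : ℕ}
    (hg : R (m+1) g) (hf : R (n+1) f) :
    R (n*m+1) (fun x => g (f x)) := by
  rcases Nat.eq_zero_or_pos n with hn | hn
  · -- f constant
    subst hn
    rw [R_succ_iff]
    intro b
    have h0 : D b f = (0 : A → B) := hf b
    have : D b (fun x => g (f x)) = 0 := by
      funext x
      have : f (b + x) - f x = 0 := congrFun h0 x
      have hfb : f (b + x) = f x := by
        have := congrFun h0 x; simpa [sub_eq_zero] using this
      simp [D, hfb]
    rw [show (0:ℕ)*m = 0 by ring, this]
    exact R_zero_fun 0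
  rcases Nat.eq_zero_or_pos m with hm | hm
  · -- g constant
    subst hm
    rw [R_succ_iff]
    intro b
    have hgc : ∀ y z : B, g y = g z := by
      intro y z
      have h1 := hg (y - z)
      have := congrFun (h1 : D (y - z) g = 0) z
      simpa [D, sub_eq_zero, sub_add_cancel] using this
    have : D b (fun x => g (f x)) = 0 := by
      funext x; simp [D, hgc (f (b+x)) (f x)]
    rw [show n*0 = 0 by ring, this]
    exact R_zero_fun 0
  · -- main case
    rw [R_succ_iff]
    intro b
    rw [D_comp]
    have key := main g m n hg (n*m - 1) f hf [D b f] [n-1]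
      (List.Forall₂.cons ⟨by simpa [Nat.sub_add_cancel hn] using hf b, Nat.sub_le n 1⟩
        List.Forall₂.nil)
      (by simp only [List.length_cons, List.length_nil]; omega)
      (by simp only [List.length_cons, List.length_nil, List.sum_cons, List.sum_nil]
          have h6 : (m - (0+1)) * n + n = m * n := by
            rw [← Nat.succ_mul]; congr 1; omega
          have h7 : n * m = m * n := Nat.mul_comm n m
          omega)
    have h8 : n*m - 1 + 1 = n*m := by
      have : 1 ≤ n*m := Nat.mul_pos hn hm
      omega
    rwa [h8] at key

section Bridge

variable {iota : Type*} [DecidableEq iota]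

/-- alternating sum over subsets of `I`. -/
def S (I : Finset iota) (a : iota → A) (f : A → B) (x : A) : B :=
  ∑ J ∈ I.powerset, ((-1 : ℤ) ^ (I.card - J.card)) • f ((∑ j ∈ J, a j) + x)

lemma S_empty (a : iota → A) (f : A → B) (x : A) : S ∅ a f x = f x := by
  simp [S]

lemma S_congr {I : Finset iota} {a a' : iota → A} (h : ∀ i ∈ I, a i = a' i)
    (f : A → B) (x : A) : S I a f x = S I a' f x := by
  unfold S
  refine Finset.sum_congr rfl fun J hJ => ?_
  have hsub := Finset.mem_powerset.mp hJ
  have : ∑ j ∈ J, a j = ∑ j ∈ J, a' j :=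
    Finset.sum_congr rfl fun j hj => h j (hsub hj)
  rw [this]

lemma S_insert {I : Finset iota} {i : iota} (hi : i ∉ I) (a : iota → A)
    (f : A → B) (x : A) : S (insert i I) a f x = S I a (D (a i) f) x := by
  unfold S
  rw [Finset.powerset_insert, Finset.sum_union, Finset.sum_image]
  · have hcard : (insert i I).card = I.card + 1 := Finset.card_insert_of_notMem hi
    have h1 : ∀ J ∈ I.powerset,
        ((-1 : ℤ) ^ ((insert i I).card - J.card)) • f ((∑ j ∈ J, a j) + x)
          = -(((-1 : ℤ) ^ (I.card - J.card)) • f ((∑ j ∈ J, a j) + x)) := by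
      intro J hJ
      have hle : J.card ≤ I.card := Finset.card_le_card (Finset.mem_powerset.mp hJ)
      rw [hcard, show I.card + 1 - J.card = (I.card - J.card) + 1 by omega,
        pow_succ, mul_neg_one, neg_smul]
    have h2 : ∀ J ∈ I.powerset,
        ((-1 : ℤ) ^ ((insert i I).card - (insert i J).card)) • f ((∑ j ∈ insert i J, a j) + x)
          = ((-1 : ℤ) ^ (I.card - J.card)) • f (a i + ((∑ j ∈ J, a j) + x)) := by
      intro J hJ
      have hiJ : i ∉ J := fun h => hi (Finset.mem_powerset.mp hJ h)
      rw [hcard, Finset.card_insert_of_notMem hiJ, Nat.succ_sub_succ,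
        Finset.sum_insert hiJ, add_assoc]
    rw [Finset.sum_congr rfl h1, Finset.sum_congr rfl h2]
    rw [Finset.sum_neg_distrib]
    rw [show ∀ (p q : B), -p + q = q - p from fun p q => by abel]
    rw [← Finset.sum_sub_distrib]
    refine Finset.sum_congr rfl fun J hJ => ?_
    rw [← smul_sub]
    rfl
  · intro J1 h1 J2 h2 hins
    have hi1 : i ∉ J1 := fun h => hi (Finset.mem_powerset.mp h1 h)
    have hi2 : i ∉ J2 := fun h => hi (Finset.mem_powerset.mp h2 h)
    rw [← Finset.erase_insert hi1, ← Finset.erase_insert hi2, hins]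
  · rw [Finset.disjoint_left]
    intro J hJ hJ'
    obtain ⟨J', hJ', rfl⟩ := Finset.mem_image.mp hJ'
    have : i ∈ (J' : Finset iota) ∨ True := Or.inr trivial
    exact hi (Finset.mem_powerset.mp hJ (Finset.mem_insert_self i J'))

lemma S_eq_zero (I : Finset iota) (f : A → B) (h : R I.card f)
    (a : iota → A) (x : A) : S I a f x = 0 := by
  classical
  induction I using Finset.induction_on generalizing f with
  | empty =>
    rw [S_empty]
    exact congrFun (by simpa using h) x
  | insert i I hi ih =>
    rw [S_insert hi]
    rw [Finset.card_insert_of_notMem hi] at h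
    exact ih _ (h (a i))

lemma R_of_forall_S (k : ℕ) (f : A → B)
    (h : ∀ (a : ℕ → A) (x : A), S (Finset.range k) a f x = 0) : R k f := by
  induction k generalizing f with
  | zero =>
    funext x
    have := h (fun _ => 0) x
    rw [show (Finset.range 0) = (∅ : Finset ℕ) from rfl, S_empty] at this
    exact this
  | succ k ih =>
    intro b
    apply ih
    intro a x
    have hnotmem : k ∉ Finset.range k := by simp
    have := h (fun i => if i = k then b else a i) x
    rw [Finset.range_add_one, S_insert hnotmem] at this
    simp only [if_pos rfl] at this
    rw [← this]
    refine (S_congr (fun i hi => ?_) _ _).symm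
    have : i ≠ k := by simp at hi; omega
    simp [this]

lemma fin_sum_eq (k : ℕ) (aN : ℕ → A) (f : A → B) (x : A) :
    ∑ J : Finset (Fin k), ((-1 : ℤ) ^ (k - J.card)) • f ((∑ j ∈ J, aN j.val) + x)
      = S (Finset.range k) aN f x := by
  classical
  unfold S
  refine Finset.sum_nbij' (fun J => J.map Fin.valEmbedding)
    (fun J' => Finset.univ.filter (fun j : Fin k => j.val ∈ J')) ?_ ?_ ?_ ?_ ?_
  · intro J _
    rw [Finset.mem_powerset]
    intro i hi
    obtain ⟨j, _, rfl⟩ := Finset.mem_map.mp hi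
    exact Finset.mem_range.mpr j.isLt
  · intro J' _
    exact Finset.mem_univ _
  · intro J _
    ext j
    simp only [Finset.mem_filter, Finset.mem_univ, true_and, Finset.mem_map,
      Fin.valEmbedding_apply]
    constructor
    · rintro ⟨j', hj', h⟩
      rwa [← Fin.val_injective h]
    · intro hj
      exact ⟨j, hj, rfl⟩
  · intro J' hJ'
    have hsub := Finset.mem_powerset.mp hJ'
    ext i
    simp only [Finset.mem_map, Finset.mem_filter, Finset.mem_univ, true_and,
      Fin.valEmbedding_apply]
    constructor
    · rintro ⟨j, hj, rfl⟩; exact hj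
    · intro hi
      exact ⟨⟨i, Finset.mem_range.mp (hsub hi)⟩, hi, rfl⟩
  · intro J _
    rw [Finset.card_map, Finset.card_range]
    congr 2
    rw [Finset.sum_map]
    rfl

end Bridge

theorem R_of_isPolyDeg {f : A → B} {n : ℕ} (h : IsPolyDeg f n) : R (n+1) f := by
  apply R_of_forall_S
  intro a x
  have := h (n+1) (Nat.lt_succ_self n) (fun j : Fin (n+1) => a j.val) x
  rwa [fin_sum_eq] at this

theorem isPolyDeg_of_R {f : A → B} {n : ℕ} (h : R (n+1) f) : IsPolyDeg f n := by
  intro k hk a x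
  have hR : R k f := R_of_le (by omega) h
  set aN : ℕ → A := fun i => if hi : i < k then a ⟨i, hi⟩ else 0 with haN
  have h1 : ∀ j : Fin k, a j = aN j.val := by
    intro j
    simp [haN, j.isLt]
  calc ∑ J : Finset (Fin k), ((-1 : ℤ) ^ (k - J.card)) • f ((∑ j ∈ J, a j) + x)
      = ∑ J : Finset (Fin k), ((-1 : ℤ) ^ (k - J.card)) • f ((∑ j ∈ J, aN j.val) + x) := by
        refine Finset.sum_congr rfl fun J _ => ?_
        rw [Finset.sum_congr rfl fun j _ => h1 j]
    _ = S (Finset.range k) aN f x := fin_sum_eq k aN f x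
    _ = 0 := by
        have := S_eq_zero (Finset.range k) f (by rwa [Finset.card_range]) aN x
        exact this

theorem isPolyDeg_comp' {A B C : Type*} [AddCommGroup A] [AddCommGroup B] [AddCommGroup C]
    (f : A → B) (g : B → C) (n m : ℕ)
    (hf : IsPolyDeg f n) (hg : IsPolyDeg g m) :
    IsPolyDeg (g ∘ f) (n * m) := by
  have h1 := R_of_isPolyDeg hf
  have h2 := R_of_isPolyDeg hg
  have h3 := R_comp h2 h1
  exact isPolyDeg_of_R h3

end PolyComp


/-- Composition of polynomial maps: if `f` has degree at most `n` and `g` degree at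
most `m`, then `g ∘ f` has degree at most `nm`. -/
theorem isPolyDeg_comp {A B C : Type*} [AddCommGroup A] [AddCommGroup B] [AddCommGroup C]
    (f : A → B) (g : B → C) (n m : ℕ)
    (hf : IsPolyDeg f n) (hg : IsPolyDeg g m) :
    IsPolyDeg (g ∘ f) (n * m) := by
  exact PolyComp.isPolyDeg_comp' f g n m hf hg
end

section
/- Let f, g : A → B be polynomial maps between abelian groups, and let A₀ ⊆ A be a submonoid that generates A as a group. If f and g agree on A₀, then f = g on all of A. -/
/-- Polynomial maps agreeing on a generating submonoid agree everywhere. -/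
theorem polynomial_eq_of_eqOn_generating_submonoid {A B : Type*}
    [AddCommGroup A] [AddCommGroup B] (f g : A → B)
    (hf : ∃ n, IsPolyDeg f n) (hg : ∃ n, IsPolyDeg g n)
    (A₀ : AddSubmonoid A) (hgen : AddSubgroup.closure (A₀ : Set A) = ⊤)
    (hagree : ∀ x ∈ A₀, f x = g x) :
    f = g := by
  obtain ⟨m, hfm⟩ := hf
  obtain ⟨m', hgm⟩ := hg
  funext x
  -- write x = p - q with p, q ∈ A₀
  have hx : ∃ p ∈ A₀, ∃ q ∈ A₀, x = p - q := by
    have hxmem : x ∈ AddSubgroup.closure (A₀ : Set A) := by rw [hgen]; trivial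
    induction hxmem using AddSubgroup.closure_induction with
    | mem y hy => exact ⟨y, hy, 0, A₀.zero_mem, by simp⟩
    | zero => exact ⟨0, A₀.zero_mem, 0, A₀.zero_mem, by simp⟩
    | add y z _ _ hy hz =>
        obtain ⟨p1, hp1, q1, hq1, rfl⟩ := hy
        obtain ⟨p2, hp2, q2, hq2, rfl⟩ := hz
        exact ⟨p1 + p2, A₀.add_mem hp1 hp2, q1 + q2, A₀.add_mem hq1 hq2, by abel⟩
    | neg y _ hy =>
        obtain ⟨p1, hp1, q1, hq1, rfl⟩ := hy
        exact ⟨q1, hq1, p1, hp1, by abel⟩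
  obtain ⟨p, hp, q, hq, rfl⟩ := hx
  set k := m + m' + 1 with hk
  have Hf := hfm k (by omega) (fun _ => q) (p - q)
  have Hg := hgm k (by omega) (fun _ => q) (p - q)
  have Hsub : ∑ J : Finset (Fin k),
      ((-1 : ℤ) ^ (k - J.card)) • (f ((∑ _j ∈ J, q) + (p - q)) - g ((∑ _j ∈ J, q) + (p - q)))
      = 0 := by
    simp only [smul_sub]
    rw [Finset.sum_sub_distrib, Hf, Hg, sub_zero]
  -- every nonempty J contributes 0
  have hzero : ∀ J : Finset (Fin k), J ≠ ∅ →
      ((-1 : ℤ) ^ (k - J.card)) • (f ((∑ _j ∈ J, q) + (p - q)) - g ((∑ _j ∈ J, q) + (p - q)))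
      = 0 := by
    intro J hJ
    have hcard : 1 ≤ J.card := Finset.card_pos.mpr (Finset.nonempty_iff_ne_empty.mpr hJ)
    have harg : (∑ _j ∈ J, q) + (p - q) = (J.card - 1) • q + p := by
      rw [Finset.sum_const]
      have : J.card = (J.card - 1) + 1 := by omega
      rw [this, add_smul, one_smul]
      rw [Nat.add_sub_cancel]
      abel
    have hmem : (∑ _j ∈ J, q) + (p - q) ∈ A₀ := by
      rw [harg]
      exact A₀.add_mem (AddSubmonoid.nsmul_mem A₀ hq _) hp
    rw [hagree _ hmem, sub_self, smul_zero]
  rw [Finset.sum_eq_single ∅ (fun J _ hJ => hzero J hJ) (by simp)] at Hsub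
  simp only [Finset.sum_empty, Finset.card_empty, Nat.sub_zero, zero_add] at Hsub
  have h2 : ((-1 : ℤ) ^ k) • (((-1 : ℤ) ^ k) • (f (p - q) - g (p - q))) = 0 := by
    rw [Hsub, smul_zero]
  rw [smul_smul, ← pow_add, Even.neg_one_pow ⟨k, rfl⟩, one_smul] at h2
  exact sub_eq_zero.mp h2
end

section
/- Let A be a commutative ring (additively complete semiring) with trivial G-action, G a finite group, and let H₁,…,H_r be a list of subgroups of G containing one representative of each conjugacy class, ordered so that |H_i| ≤ |H_j| for i ≤ j. Define the ghost map γ : (Fin r → A) → (Fin r → A) by γ(a)(j) = ∑_i |(G/H_i)^{H_j}| · a(i)^{|H_i|/|H_j|} (the sum being over those i with (G/H_i)^{H_j} nonempty, so the exponents are positive integers). If A is torsion-free as an abelian group, then γ is injective. -/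
section Aux
variable {G : Type*} [Group G] [Fintype G]

omit [Fintype G] in
lemma aux_conj_le {Hi Hj : Subgroup G} (y : G ⧸ Hi) (hy : ∀ g ∈ Hj, g • y = y) :
    ∃ c : G, Subgroup.map (MulAut.conj c).toMonoidHom Hj ≤ Hi := by
  obtain ⟨x, rfl⟩ := QuotientGroup.mk_surjective y
  refine ⟨x⁻¹, ?_⟩
  rintro h ⟨g, hg, rfl⟩
  have := hy g hg
  rw [MulAction.Quotient.smul_mk, QuotientGroup.eq] at this
  simpa [MulAut.conj, mul_assoc] using Hi.inv_mem this

omit [Fintype G] in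
lemma aux_card_map (c : G) (Hj : Subgroup G) :
    Nat.card (Subgroup.map (MulAut.conj c).toMonoidHom Hj) = Nat.card Hj :=
  (Nat.card_congr (Hj.equivMapOfInjective _ (MulAut.conj c).injective).toEquiv).symm

lemma aux_eq_of_le {H K : Subgroup G} (h : H ≤ K) (hc : Nat.card K ≤ Nat.card H) : H = K := by
  apply SetLike.coe_injective
  refine Set.eq_of_subset_of_ncard_le h ?_ (Set.toFinite _)
  rwa [← Nat.card_coe_set_eq, ← Nat.card_coe_set_eq]

end Aux

/-- Injectivity of the ghost map.  Let `H 1, …, H r` be a list of subgroups of the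
finite group `G` containing exactly one representative of each conjugacy class,
ordered with nondecreasing order.  For a torsion-free commutative ring `A`, the map
`γ(a)(j) = ∑ᵢ |(G/Hᵢ)^{Hⱼ}| · a(i)^{|Hᵢ|/|Hⱼ|}` is injective. -/
theorem ghost_map_injective {G : Type*} [Group G] [Fintype G] {A : Type*} [CommRing A]
    (htf : ∀ n : ℕ, n ≠ 0 → Function.Injective (fun a : A => n • a))
    (r : ℕ) (H : Fin r → Subgroup G)
    (hconj : ∀ K : Subgroup G, ∃! i : Fin r,
        ∃ g : G, Subgroup.map (MulAut.conj g).toMonoidHom (H i) = K)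
    (horder : ∀ i j : Fin r, i ≤ j → Nat.card (H i) ≤ Nat.card (H j)) :
    Function.Injective (fun (a : Fin r → A) (j : Fin r) =>
      ∑ i : Fin r,
        (Nat.card {y : G ⧸ H i // ∀ g ∈ H j, g • y = y}) •
          (a i) ^ (Nat.card (H i) / Nat.card (H j))) := by
  intro a b hab
  simp only [funext_iff] at hab
  -- key step : one index at a time, downward
  have step : ∀ k : Fin r, (∀ i : Fin r, k < i → a i = b i) → a k = b k := by
    intro k ih
    have hk := hab k
    rw [← Finset.sum_erase_add _ _ (Finset.mem_univ k),
        ← Finset.sum_erase_add _ _ (Finset.mem_univ k)] at hk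
    have hrest : ∑ i ∈ Finset.univ.erase k,
        (Nat.card {y : G ⧸ H i // ∀ g ∈ H k, g • y = y}) •
          (a i) ^ (Nat.card (H i) / Nat.card (H k)) =
        ∑ i ∈ Finset.univ.erase k,
        (Nat.card {y : G ⧸ H i // ∀ g ∈ H k, g • y = y}) •
          (b i) ^ (Nat.card (H i) / Nat.card (H k)) := by
      refine Finset.sum_congr rfl fun i hi => ?_
      have hik : i ≠ k := Finset.ne_of_mem_erase hi
      by_cases hc : Nat.card {y : G ⧸ H i // ∀ g ∈ H k, g • y = y} = 0
      · rw [hc, zero_smul, zero_smul]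
      · -- nonempty fixed set : H k subconjugate to H i
        have hne : Nonempty {y : G ⧸ H i // ∀ g ∈ H k, g • y = y} :=
          (Nat.card_ne_zero.mp hc).1
        obtain ⟨y, hy⟩ := hne
        obtain ⟨c, hcle⟩ := aux_conj_le y hy
        have hcard : Nat.card (H k) ≤ Nat.card (H i) := by
          have := Subgroup.card_le_of_le hcle
          rwa [aux_card_map] at this
        have hki : k < i := by
          rcases lt_or_gt_of_ne hik with h1 | h1
          · exfalso
            have h2 : Nat.card (H i) ≤ Nat.card (H k) := horder i k h1.le
            have heq : Subgroup.map (MulAut.conj c).toMonoidHom (H k) = H i :=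
              aux_eq_of_le hcle (by rwa [aux_card_map])
            obtain ⟨j, -, hj⟩ := hconj (H i)
            have e1 : k = j := hj k ⟨c, heq⟩
            have e2 : i = j := hj i ⟨1, by
              have h1 : (MulAut.conj (1:G)).toMonoidHom = MonoidHom.id G := by ext; simp
              rw [h1, Subgroup.map_id]⟩
            exact hik (e2.trans e1.symm)
          · exact h1
        rw [ih i hki]
    rw [hrest] at hk
    have hk2 := add_left_cancel hk
    -- diagonal coefficient is nonzero, exponent is 1
    have hpos : Nat.card {y : G ⧸ H k // ∀ g ∈ H k, g • y = y} ≠ 0 := by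
      have : Nonempty {y : G ⧸ H k // ∀ g ∈ H k, g • y = y} := by
        refine ⟨⟨QuotientGroup.mk 1, fun g hg => ?_⟩⟩
        rw [MulAction.Quotient.smul_mk, QuotientGroup.eq]
        simpa using (H k).inv_mem hg
      exact Nat.card_ne_zero.mpr ⟨this, inferInstance⟩
    have hone : Nat.card (H k) / Nat.card (H k) = 1 :=
      Nat.div_self Nat.card_pos
    rw [hone, pow_one, pow_one] at hk2
    exact htf _ hpos hk2
  -- downward induction
  have key : ∀ m : ℕ, ∀ k : Fin r, r - (k : ℕ) ≤ m → a k = b k := by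
    intro m
    induction m with
    | zero => intro k hkm; exact absurd hkm (by omega)
    | succ m ihm =>
      intro k hkm
      exact step k fun i hi => ihm i (by omega)
  funext k
  exact key r k (by omega)
end
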